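/- For every width w ≥ 1, every x : BitVec w, and every index i with 0 ≤ i < w, the i-th (least-significant-first) bit of x equals 1 if and only if 2^(w−1) ≤ᵤ 2^(w−i−1) · x; that is, x.getLsbD i = true ↔ 2^(w−1) ≤ (2^(w−i−1) * x).toNat. -/

import Mathlib

/-- Bit extraction as an unsigned inequality: `x[i] ↔ 2^(w-1) ≤ᵤ 2^(w-i-1)·x`. -/
theorem getLsbD_iff_shift_mul_ge (w : ℕ) (hw : 1 ≤ w) (x : BitVec w) (i : ℕ) (hi : i < w) :
    x.getLsbD i = true ↔ 2 ^ (w - 1) ≤ (BitVec.ofNat w (2 ^ (w - i - 1)) * x).toNat := by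
  have h1 : BitVec.ofNat w (2 ^ (w - i - 1)) * x = x <<< (w - i - 1) := by
    rw [BitVec.shiftLeft_eq_mul_twoPow, mul_comm]
    congr 1
    apply BitVec.eq_of_toNat_eq
    simp [BitVec.toNat_twoPow]
    rw [← Nat.pow_mod]
  rw [h1]
  have hpow : (2:ℕ) ^ w = 2 * 2 ^ (w - 1) := by
    rw [← pow_succ']; congr 1; omega
  have h2 : 2 ^ (w - 1) ≤ (x <<< (w - i - 1)).toNat ↔ (x <<< (w - i - 1)).msb = true := by
    rw [BitVec.msb_eq_true_iff_two_mul_ge, hpow]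
    omega
  rw [h2, BitVec.msb_eq_getLsbD_last, BitVec.getLsbD_shiftLeft]
  have h3 : w - 1 - (w - i - 1) = i := by omega
  simp [h3]
  omega
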